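/- Let real sequences satisfy Δ_0 = Δ, d_0 = γΔ, Δ_{t+1} = Δ_t/2 + Δ_t^{2/3}, d_{t+1} = d_t/2 + d_t^{2/3}, and let j satisfy 2^{j-1} < γ^{4/3}Δ ≤ 2^j with γ^{-4/3} < Δ. Then for every 0 ≤ t < j: d_t ≥ γΔ/2^t ≥ (Δ/2^t)^{1/4}, and since Δ_t ≤ (1+ε/4)Δ/2^t for small γ, it follows that d_t > (log Δ_t)^4 when γ is sufficiently small. -/
import Mathlib

open Real

private lemma stmt19_aux_low (f : ℕ → ℝ) (a : ℝ) (ha : 0 < a)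
    (h0 : f 0 = a) (hrec : ∀ t, f (t + 1) = f t / 2 + f t ^ ((2 : ℝ) / 3)) :
    ∀ t, a / 2 ^ t ≤ f t := by
  intro t
  induction t with
  | zero => simp [h0]
  | succ n ih =>
    have hfn : 0 < f n := lt_of_lt_of_le (by positivity) ih
    have h1 : (0:ℝ) ≤ f n ^ ((2:ℝ)/3) := Real.rpow_nonneg hfn.le _
    have h2 : a / 2 ^ (n+1) = (a / 2 ^ n) / 2 := by rw [pow_succ]; ring
    rw [hrec, h2]
    linarith

set_option maxHeartbeats 1000000 in
theorem stmt_19 (ε : ℝ) (hε : 0 < ε) : ∃ γ₀ : ℝ, 0 < γ₀ ∧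
    ∀ γ Δ : ℝ, 0 < γ → γ < γ₀ → γ ^ (-(4 : ℝ) / 3) < Δ →
      ∀ j : ℕ, 1 ≤ j →
        (2 : ℝ) ^ (j - 1) < γ ^ ((4 : ℝ) / 3) * Δ →
        γ ^ ((4 : ℝ) / 3) * Δ ≤ (2 : ℝ) ^ j →
        ∀ A d : ℕ → ℝ, A 0 = Δ → d 0 = γ * Δ →
          (∀ t, A (t + 1) = A t / 2 + A t ^ ((2 : ℝ) / 3)) →
          (∀ t, d (t + 1) = d t / 2 + d t ^ ((2 : ℝ) / 3)) →
          ∀ t : ℕ, t < j →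
            (Δ / 2 ^ t) ^ ((1 : ℝ) / 4) ≤ γ * Δ / 2 ^ t ∧
            γ * Δ / 2 ^ t ≤ d t ∧
            A t ≤ (1 + ε / 4) * Δ / 2 ^ t ∧
            (Real.log (A t)) ^ 4 < d t := by
  set C : ℝ := 1 + ε / 4 with hCdef
  have hC1 : (1:ℝ) ≤ C := by simp only [hCdef]; linarith
  have hCpos : (0:ℝ) < C := by linarith
  set K : ℝ := 32 ^ (32:ℕ) * C with hKdef
  have hKpos : (0:ℝ) < K := by positivity
  set m : ℝ := min (ε/64) (1/16) with hmdef
  have hm : (0:ℝ) < m := lt_min (by positivity) (by norm_num)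
  refine ⟨min (m ^ ((9:ℝ)/4)) (K ^ (-(3:ℝ)/4)), lt_min (Real.rpow_pos_of_pos hm _) (Real.rpow_pos_of_pos hKpos _), ?_⟩
  intro γ Δ hγ hγγ₀ hΔ j hj hjl _hjr A d hA0 hd0 hAr hdr
  -- basic facts about g := γ^(4/9)
  set g : ℝ := γ ^ ((4:ℝ)/9) with hgdef
  have hgpos : 0 < g := Real.rpow_pos_of_pos hγ _
  have hgm : g < m := by
    have h1 : γ < m ^ ((9:ℝ)/4) := lt_of_lt_of_le hγγ₀ (min_le_left _ _)
    have h2 := Real.rpow_lt_rpow hγ.le h1 (by norm_num : (0:ℝ) < (4:ℝ)/9)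
    rw [← Real.rpow_mul hm.le] at h2
    have h3 : (9:ℝ)/4 * ((4:ℝ)/9) = 1 := by norm_num
    rwa [h3, Real.rpow_one] at h2
  have hg16 : g < 1/16 := lt_of_lt_of_le hgm (min_le_right _ _)
  have hgε : g < ε/64 := lt_of_lt_of_le hgm (min_le_left _ _)
  have hh16 : (16:ℝ) < g⁻¹ := by
    rw [← one_div, lt_div_iff₀ hgpos]; linarith
  have hg3 : γ ^ ((4:ℝ)/3) = g ^ (3:ℕ) := by
    rw [hgdef, ← Real.rpow_natCast (γ ^ ((4:ℝ)/9)) 3, ← Real.rpow_mul hγ.le]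
    norm_num
  have hγg : γ = g ^ ((9:ℝ)/4) := by
    rw [hgdef, ← Real.rpow_mul hγ.le]; norm_num
  have hΔpos : 0 < Δ := lt_trans (Real.rpow_pos_of_pos hγ _) hΔ
  have hg3pos : 0 < g ^ (3:ℕ) := pow_pos hgpos 3
  -- key: for t < j, (g⁻¹)^3 < Δ / 2^t
  have key : ∀ t, t < j → (g⁻¹) ^ (3:ℕ) < Δ / 2 ^ t := by
    intro t htj
    have h2t : (2:ℝ) ^ t ≤ 2 ^ (j-1) := by
      apply pow_le_pow_right₀ one_le_two (Nat.le_pred_of_lt htj)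
    have h1 : (2:ℝ) ^ t < γ ^ ((4:ℝ)/3) * Δ := lt_of_le_of_lt h2t hjl
    rw [hg3, mul_comm] at h1
    rw [lt_div_iff₀ (pow_pos two_pos t)]
    have heq : (g⁻¹) ^ (3:ℕ) * 2 ^ t = 2 ^ t / g ^ (3:ℕ) := by
      rw [inv_pow]; ring
    rw [heq, div_lt_iff₀ hg3pos]
    linarith
  have hKg : K < (g⁻¹) ^ (3:ℕ) := by
    have h1 : γ < K ^ (-(3:ℝ)/4) := lt_of_lt_of_le hγγ₀ (min_le_right _ _)
    have h2 := Real.rpow_lt_rpow hγ.le h1 (by norm_num : (0:ℝ) < (4:ℝ)/3)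
    rw [← Real.rpow_mul hKpos.le] at h2
    have h3 : (-(3:ℝ)/4) * ((4:ℝ)/3) = -1 := by norm_num
    rw [h3, Real.rpow_neg_one] at h2
    rw [hg3] at h2
    have h5 : K * g ^ (3:ℕ) < 1 := by
      have h6 := mul_lt_mul_of_pos_left h2 hKpos
      rwa [mul_inv_cancel₀ hKpos.ne'] at h6
    rw [inv_pow, ← one_div, lt_div_iff₀ hg3pos]
    linarith
  have h4096 : (4096:ℝ) < (g⁻¹) ^ (3:ℕ) := by
    have := pow_lt_pow_left₀ hh16 (by norm_num : (0:ℝ) ≤ 16) (by norm_num : 3 ≠ 0)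
    norm_num at this ⊢; linarith
  have hginv3pos : 0 < (g⁻¹) ^ (3:ℕ) := pow_pos (inv_pos.mpr hgpos) 3
  -- the cube-root of 2
  set a : ℝ := (2:ℝ) ^ ((1:ℝ)/3) with hadef
  have hapos : 0 < a := Real.rpow_pos_of_pos two_pos _
  have ha3 : a ^ (3:ℕ) = 2 := by
    rw [hadef, ← Real.rpow_natCast ((2:ℝ) ^ ((1:ℝ)/3)) 3, ← Real.rpow_mul (by norm_num : (0:ℝ) ≤ 2)]
    norm_num
  have haub : a ≤ 63/50 := by
    by_contra h
    push_neg at h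
    have := pow_lt_pow_left₀ h (by norm_num : (0:ℝ) ≤ 63/50) (by norm_num : 3 ≠ 0)
    rw [ha3] at this
    norm_num at this
  have ha2 : a ^ 2 ≤ (63/50) ^ 2 := by nlinarith
  have haq : (8 + a ^ 2) * a ^ 2 ≤ 16 := by nlinarith [sq_nonneg a]
  have ha23 : (2:ℝ) ^ ((2:ℝ)/3) = a ^ 2 := by
    rw [hadef, ← Real.rpow_natCast ((2:ℝ) ^ ((1:ℝ)/3)) 2, ← Real.rpow_mul (by norm_num : (0:ℝ) ≤ 2)]
    norm_num
  -- lower bounds on the sequences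
  have hAlow : ∀ s, Δ / 2 ^ s ≤ A s := stmt19_aux_low A Δ hΔpos hA0 hAr
  have hdlow : ∀ s, γ * Δ / 2 ^ s ≤ d s := stmt19_aux_low d (γ * Δ) (mul_pos hγ hΔpos) hd0 hdr
  -- cube-root facts for y = Δ/2^s with s < j
  have hy13 : ∀ s, s < j → g⁻¹ < (Δ / 2 ^ s) ^ ((1:ℝ)/3) := by
    intro s hs
    have h := Real.rpow_lt_rpow hginv3pos.le (key s hs) (by norm_num : (0:ℝ) < (1:ℝ)/3)
    have heq : ((g⁻¹) ^ (3:ℕ)) ^ ((1:ℝ)/3) = g⁻¹ := by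
      rw [show ((1:ℝ)/3) = ((3:ℕ):ℝ)⁻¹ by norm_num]
      exact Real.pow_rpow_inv_natCast (inv_pos.mpr hgpos).le (by norm_num)
    rwa [heq] at h
  -- the upper-bound invariant
  have hAup : ∀ s, s < j → A s ≤ Δ / 2 ^ s + 16 * (Δ / 2 ^ s) ^ ((2:ℝ)/3) := by
    intro s
    induction s with
    | zero =>
      intro _
      rw [hA0, pow_zero, div_one]
      linarith [Real.rpow_nonneg hΔpos.le ((2:ℝ)/3)]
    | succ n ih =>
      intro hn1
      have hn : n < j := Nat.lt_of_succ_lt hn1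
      have ihn := ih hn
      have hyk := key n hn
      have hy0 : 0 < Δ / 2 ^ n := lt_trans hginv3pos hyk
      have hz : (0:ℝ) ≤ (Δ / 2 ^ n) ^ ((2:ℝ)/3) := Real.rpow_nonneg hy0.le _
      have hsplit : Δ / 2 ^ n = (Δ / 2 ^ n) ^ ((1:ℝ)/3) * (Δ / 2 ^ n) ^ ((2:ℝ)/3) := by
        rw [← Real.rpow_add hy0]; norm_num
      have h16y : 16 * (Δ / 2 ^ n) ^ ((2:ℝ)/3) ≤ Δ / 2 ^ n := by
        calc 16 * (Δ / 2 ^ n) ^ ((2:ℝ)/3)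
            ≤ (Δ / 2 ^ n) ^ ((1:ℝ)/3) * (Δ / 2 ^ n) ^ ((2:ℝ)/3) := by
              apply mul_le_mul_of_nonneg_right _ hz
              exact le_of_lt (lt_trans hh16 (hy13 n hn))
          _ = Δ / 2 ^ n := hsplit.symm
      have hA2y : A n ≤ 2 * (Δ / 2 ^ n) := by linarith
      have hApos : 0 < A n := lt_of_lt_of_le hy0 (hAlow n)
      have hpow : A n ^ ((2:ℝ)/3) ≤ a ^ 2 * (Δ / 2 ^ n) ^ ((2:ℝ)/3) := by
        have h1 : A n ^ ((2:ℝ)/3) ≤ (2 * (Δ / 2 ^ n)) ^ ((2:ℝ)/3) :=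
          Real.rpow_le_rpow hApos.le hA2y (by norm_num)
        rwa [Real.mul_rpow (by norm_num : (0:ℝ) ≤ 2) hy0.le, ha23] at h1
      have hy' : Δ / 2 ^ (n+1) = (Δ / 2 ^ n) / 2 := by rw [pow_succ]; ring
      have hy'pow : (Δ / 2 ^ (n+1)) ^ ((2:ℝ)/3) = (Δ / 2 ^ n) ^ ((2:ℝ)/3) / a ^ 2 := by
        rw [hy', Real.div_rpow hy0.le (by norm_num : (0:ℝ) ≤ 2), ha23]
      have hcoef : 8 + a ^ 2 ≤ 16 / a ^ 2 := (le_div_iff₀ (by positivity)).mpr haq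
      have hfinal : 8 * (Δ / 2 ^ n) ^ ((2:ℝ)/3) + a ^ 2 * (Δ / 2 ^ n) ^ ((2:ℝ)/3)
          ≤ 16 * ((Δ / 2 ^ n) ^ ((2:ℝ)/3) / a ^ 2) := by
        have h := mul_le_mul_of_nonneg_right hcoef hz
        calc 8 * (Δ / 2 ^ n) ^ ((2:ℝ)/3) + a ^ 2 * (Δ / 2 ^ n) ^ ((2:ℝ)/3)
            = (8 + a ^ 2) * (Δ / 2 ^ n) ^ ((2:ℝ)/3) := by ring
          _ ≤ 16 / a ^ 2 * (Δ / 2 ^ n) ^ ((2:ℝ)/3) := h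
          _ = 16 * ((Δ / 2 ^ n) ^ ((2:ℝ)/3) / a ^ 2) := by ring
      rw [hAr n, hy'pow, hy']
      linarith
  -- now the four claims for t < j
  intro t ht
  have hyk := key t ht
  have hy0 : 0 < Δ / 2 ^ t := lt_trans hginv3pos hyk
  have hz : (0:ℝ) ≤ (Δ / 2 ^ t) ^ ((2:ℝ)/3) := Real.rpow_nonneg hy0.le _
  -- claim 1
  have p1 : (Δ / 2 ^ t) ^ ((1:ℝ)/4) ≤ γ * Δ / 2 ^ t := by
    have h34 : γ⁻¹ < (Δ / 2 ^ t) ^ ((3:ℝ)/4) := by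
      have h := Real.rpow_lt_rpow hginv3pos.le hyk (by norm_num : (0:ℝ) < (3:ℝ)/4)
      have heq : ((g⁻¹) ^ (3:ℕ)) ^ ((3:ℝ)/4) = γ⁻¹ := by
        rw [← Real.rpow_natCast g⁻¹ 3, ← Real.rpow_mul (inv_pos.mpr hgpos).le]
        rw [hγg, ← Real.inv_rpow hgpos.le]
        norm_num
      rwa [heq] at h
    have h1 : 1 ≤ γ * (Δ / 2 ^ t) ^ ((3:ℝ)/4) := by
      have h2 := mul_lt_mul_of_pos_left h34 hγ
      rw [mul_inv_cancel₀ hγ.ne'] at h2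
      exact h2.le
    calc (Δ / 2 ^ t) ^ ((1:ℝ)/4)
        = 1 * (Δ / 2 ^ t) ^ ((1:ℝ)/4) := (one_mul _).symm
      _ ≤ (γ * (Δ / 2 ^ t) ^ ((3:ℝ)/4)) * (Δ / 2 ^ t) ^ ((1:ℝ)/4) :=
          mul_le_mul_of_nonneg_right h1 (Real.rpow_nonneg hy0.le _)
      _ = γ * ((Δ / 2 ^ t) ^ ((3:ℝ)/4) * (Δ / 2 ^ t) ^ ((1:ℝ)/4)) := mul_assoc _ _ _
      _ = γ * (Δ / 2 ^ t) := by rw [← Real.rpow_add hy0]; norm_num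
      _ = γ * Δ / 2 ^ t := by rw [mul_div_assoc]
  have p2 : γ * Δ / 2 ^ t ≤ d t := hdlow t
  -- claim 3
  have hεy : 16 * (Δ / 2 ^ t) ^ ((2:ℝ)/3) ≤ (ε/4) * (Δ / 2 ^ t) := by
    have hεg : 64/ε < g⁻¹ := by
      rw [← one_div, lt_div_iff₀ hgpos, div_mul_eq_mul_div, div_lt_one hε]
      linarith
    have h1 : (16:ℝ) ≤ (ε/4) * (Δ / 2 ^ t) ^ ((1:ℝ)/3) := by
      have h2 := mul_lt_mul_of_pos_left (lt_trans hεg (hy13 t ht)) (by positivity : (0:ℝ) < ε/4)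
      have heq : (ε/4) * (64/ε) = 16 := by field_simp; ring
      rw [heq] at h2
      exact h2.le
    have hsplit : Δ / 2 ^ t = (Δ / 2 ^ t) ^ ((1:ℝ)/3) * (Δ / 2 ^ t) ^ ((2:ℝ)/3) := by
      rw [← Real.rpow_add hy0]; norm_num
    calc 16 * (Δ / 2 ^ t) ^ ((2:ℝ)/3)
        ≤ ((ε/4) * (Δ / 2 ^ t) ^ ((1:ℝ)/3)) * (Δ / 2 ^ t) ^ ((2:ℝ)/3) :=
          mul_le_mul_of_nonneg_right h1 hz
      _ = (ε/4) * ((Δ / 2 ^ t) ^ ((1:ℝ)/3) * (Δ / 2 ^ t) ^ ((2:ℝ)/3)) := mul_assoc _ _ _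
      _ = (ε/4) * (Δ / 2 ^ t) := by rw [← hsplit]
  have p3 : A t ≤ (1 + ε / 4) * Δ / 2 ^ t := by
    have hup := hAup t ht
    rw [mul_div_assoc]
    have : (1 + ε/4) * (Δ / 2 ^ t) = Δ / 2 ^ t + (ε/4) * (Δ / 2 ^ t) := by ring
    rw [this]
    linarith
  -- claim 4
  have p4 : (Real.log (A t)) ^ 4 < d t := by
    have hy1 : (1:ℝ) < Δ / 2 ^ t := lt_trans (by norm_num) (lt_trans h4096 hyk)
    have hApos : 0 < A t := lt_of_lt_of_le hy0 (hAlow t)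
    have hA1 : (1:ℝ) ≤ A t := le_trans hy1.le (hAlow t)
    have hlog0 : 0 ≤ Real.log (A t) := Real.log_nonneg hA1
    have hCy0 : 0 < C * (Δ / 2 ^ t) := by positivity
    have hCy1 : (1:ℝ) ≤ C * (Δ / 2 ^ t) := by nlinarith
    have hACy : A t ≤ C * (Δ / 2 ^ t) := by
      have := p3; rw [mul_div_assoc] at this; exact this
    have hlogA : Real.log (A t) ≤ Real.log (C * (Δ / 2 ^ t)) :=
      Real.log_le_log hApos hACy
    have hlog32 : Real.log (C * (Δ / 2 ^ t)) ≤ 32 * (C * (Δ / 2 ^ t)) ^ ((1:ℝ)/32) := by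
      have h := Real.log_le_rpow_div hCy0.le (by norm_num : (0:ℝ) < (1:ℝ)/32)
      calc Real.log (C * (Δ / 2 ^ t)) ≤ (C * (Δ / 2 ^ t)) ^ ((1:ℝ)/32) / ((1:ℝ)/32) := h
        _ = 32 * (C * (Δ / 2 ^ t)) ^ ((1:ℝ)/32) := by ring
    have hpow4 : ((C * (Δ / 2 ^ t)) ^ ((1:ℝ)/32)) ^ (4:ℕ) = (C * (Δ / 2 ^ t)) ^ ((1:ℝ)/8) := by
      rw [← Real.rpow_natCast ((C * (Δ / 2 ^ t)) ^ ((1:ℝ)/32)) 4, ← Real.rpow_mul hCy0.le]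
      norm_num
    have hmulr : (C * (Δ / 2 ^ t)) ^ ((1:ℝ)/8) = C ^ ((1:ℝ)/8) * (Δ / 2 ^ t) ^ ((1:ℝ)/8) :=
      Real.mul_rpow hCpos.le hy0.le
    have hKy : K < Δ / 2 ^ t := lt_trans hKg hyk
    have hy18 : (32:ℝ) ^ (4:ℕ) * C ^ ((1:ℝ)/8) < (Δ / 2 ^ t) ^ ((1:ℝ)/8) := by
      have h1 : K ^ ((1:ℝ)/8) < (Δ / 2 ^ t) ^ ((1:ℝ)/8) :=
        Real.rpow_lt_rpow hKpos.le hKy (by norm_num)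
      have h2 : K ^ ((1:ℝ)/8) = (32:ℝ) ^ (4:ℕ) * C ^ ((1:ℝ)/8) := by
        rw [hKdef, Real.mul_rpow (by positivity) hCpos.le]
        congr 1
        rw [show ((32:ℝ) ^ (32:ℕ)) = ((32:ℝ) ^ (4:ℕ)) ^ (8:ℕ) by norm_num [← pow_mul]]
        rw [show ((1:ℝ)/8) = ((8:ℕ):ℝ)⁻¹ by norm_num]
        exact Real.pow_rpow_inv_natCast (by positivity) (by norm_num)
      rwa [h2] at h1
    calc (Real.log (A t)) ^ 4
        ≤ (Real.log (C * (Δ / 2 ^ t))) ^ 4 := pow_le_pow_left₀ hlog0 hlogA 4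
      _ ≤ (32 * (C * (Δ / 2 ^ t)) ^ ((1:ℝ)/32)) ^ 4 :=
          pow_le_pow_left₀ (Real.log_nonneg hCy1) hlog32 4
      _ = (32:ℝ) ^ (4:ℕ) * ((C * (Δ / 2 ^ t)) ^ ((1:ℝ)/32)) ^ (4:ℕ) := by ring
      _ = (32:ℝ) ^ (4:ℕ) * (C ^ ((1:ℝ)/8) * (Δ / 2 ^ t) ^ ((1:ℝ)/8)) := by rw [hpow4, hmulr]
      _ = ((32:ℝ) ^ (4:ℕ) * C ^ ((1:ℝ)/8)) * (Δ / 2 ^ t) ^ ((1:ℝ)/8) := by ring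
      _ < (Δ / 2 ^ t) ^ ((1:ℝ)/8) * (Δ / 2 ^ t) ^ ((1:ℝ)/8) :=
          mul_lt_mul_of_pos_right hy18 (Real.rpow_pos_of_pos hy0 _)
      _ = (Δ / 2 ^ t) ^ ((1:ℝ)/4) := by rw [← Real.rpow_add hy0]; norm_num
      _ ≤ γ * Δ / 2 ^ t := p1
      _ ≤ d t := p2
  exact ⟨p1, p2, p3, p4⟩
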